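/- There is an absolute constant c₀ ≥ 1 with the following property. Let c ≥ c₀, let G = (V, E, w) be a weighted directed graph with nonnegative integer edge weights, let n ≥ max(|V|, 2) and let d be a positive integer, and set p = min(c·log₂ n / d, 1) and t = ⌊d/4⌋. Let v₁, …, v_ℓ ∈ V be distinct vertices satisfying |Ball^in_G(v_i, d/4)| ≤ 0.7·|V| for every i, and let d₁, …, d_ℓ be independent random variables, each with distribution GE[p]_{≤t}. Define k to be the least index i ∈ {1,…,ℓ} such that |⋃_{j ≤ i} Ball^in_G(v_j, d_j)| > 0.1·|V|, and k = ℓ if no such index exists, and set A = ⋃_{j ≤ k} Ball^in_G(v_j, d_j). Then for every edge e ∈ E, Pr[e ∈ δ⁻(A)] ≤ c²·w(e)·log₂ n / d. -/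

import Mathlib

open Real

/-- A walk from `u` to `v` along the edge set `E`; the list records the vertices
visited after `u` (so `[]` is the empty walk, requiring `u = v`). -/
def IsWalk {V : Type*} (E : Set (V × V)) : V → V → List V → Prop
  | u, v, [] => u = v
  | u, v, x :: xs => (u, x) ∈ E ∧ IsWalk E x v xs

/-- The weight of a walk starting at `u` whose subsequent vertices are given by the list. -/
def walkWeight {V : Type*} (w : V × V → ℤ) : V → List V → ℤ
  | _, [] => 0
  | u, x :: xs => w (u, x) + walkWeight w x xs

/-- The number of negative-weight edges on a walk. -/
def countNeg {V : Type*} (w : V × V → ℤ) : V → List V → ℕ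
  | _, [] => 0
  | u, x :: xs => (if w (u, x) < 0 then 1 else 0) + countNeg w x xs

/-- `dist_G(u,v) ≤ r` : there exists a walk from `u` to `v` of weight at most `r`. -/
def DistLE {V : Type*} (E : Set (V × V)) (w : V × V → ℤ) (u v : V) (r : ℝ) : Prop :=
  ∃ p, IsWalk E u v p ∧ (walkWeight w u p : ℝ) ≤ r

/-- `Ball^in_G(v, r) = {u : dist_G(u,v) ≤ r}`. -/
def ballIn {V : Type*} (E : Set (V × V)) (w : V × V → ℤ) (v : V) (r : ℝ) : Set V :=
  {u | DistLE E w u v r}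

/-- `Ball^out_G(u, r) = {v : dist_G(u,v) ≤ r}`. -/
def ballOut {V : Type*} (E : Set (V × V)) (w : V × V → ℤ) (u : V) (r : ℝ) : Set V :=
  {v | DistLE E w u v r}

/-- There is a walk from `u` to `v`. -/
def Reach {V : Type*} (E : Set (V × V)) (u v : V) : Prop := ∃ p, IsWalk E u v p

/-- `u` and `v` lie in the same strongly connected component. -/
def SameSCC {V : Type*} (E : Set (V × V)) (u v : V) : Prop := Reach E u v ∧ Reach E v u

/-- `C` is a strongly connected component (an equivalence class of `SameSCC`). -/
def IsSCCOf {V : Type*} (E : Set (V × V)) (C : Set V) : Prop :=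
  ∃ v, C = {u | SameSCC E u v}

/-- `D` is the (attained) minimum weight of a walk from `u` to `v`. -/
def IsMinDist {V : Type*} (E : Set (V × V)) (w : V × V → ℤ) (u v : V) (D : ℤ) : Prop :=
  (∃ p, IsWalk E u v p ∧ walkWeight w u p = D) ∧
    ∀ p, IsWalk E u v p → D ≤ walkWeight w u p

/-- The union of the in-balls of the first `i` centers (`0`-indexed: centers `v_j` for `j < i`),
with radius `rad j` around center `v j`. -/
def prefixUnion {V : Type*} (E : Set (V × V)) (w : V × V → ℤ) {l : ℕ} (v : Fin l → V)
    (rad : Fin l → ℕ) (i : ℕ) : Set V :=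
  ⋃ (j : Fin l) (_ : (j : ℕ) < i), ballIn E w (v j) ((rad j : ℝ))

/-- `k` is the least index `i ∈ {1,…,l}` such that the union of the first `i` balls has more
than `0.1` times `card` vertices, and `k = l` if no such index exists. -/
def KSpec {V : Type*} (E : Set (V × V)) (w : V × V → ℤ) {l : ℕ} (v : Fin l → V)
    (rad : Fin l → ℕ) (card : ℕ) (k : ℕ) : Prop :=
  (1 ≤ k ∧ k ≤ l ∧ 0.1 * (card : ℝ) < ((prefixUnion E w v rad k).ncard : ℝ) ∧
    ∀ i, 1 ≤ i → i < k → ¬(0.1 * (card : ℝ) < ((prefixUnion E w v rad i).ncard : ℝ)))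
  ∨ (k = l ∧ ∀ i, 1 ≤ i → i ≤ l → ¬(0.1 * (card : ℝ) < ((prefixUnion E w v rad i).ncard : ℝ)))

section Aux

variable {V : Type*} (E : Set (V × V)) (w : V × V → ℤ)

lemma walkWeight_nonneg (hw : ∀ e ∈ E, 0 ≤ w e) :
    ∀ (pth : List V) (u vv : V), IsWalk E u vv pth → 0 ≤ walkWeight w u pth := by
  intro pth
  induction pth with
  | nil => intro u vv _; simp [walkWeight]
  | cons a as ih =>
    intro u vv h
    obtain ⟨he, h2⟩ := h
    exact add_nonneg (hw _ he) (ih a vv h2)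

/-- set of natural weights of walks from `u` to `vv`. -/
def wSet (u vv : V) : Set ℕ := {m | ∃ pth, IsWalk E u vv pth ∧ walkWeight w u pth = (m : ℤ)}

noncomputable def mDist (u vv : V) : ℕ := sInf (wSet E w u vv)

lemma mem_ballIn_iff (hw : ∀ e ∈ E, 0 ≤ w e) (u vv : V) (r : ℕ) :
    u ∈ ballIn E w vv (r : ℝ) ↔ (wSet E w u vv).Nonempty ∧ mDist E w u vv ≤ r := by
  constructor
  · rintro ⟨pth, hW, hle⟩
    have h0 : 0 ≤ walkWeight w u pth := walkWeight_nonneg E w hw pth u vv hW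
    have hm : ((walkWeight w u pth).toNat : ℤ) = walkWeight w u pth := Int.toNat_of_nonneg h0
    have hmem : (walkWeight w u pth).toNat ∈ wSet E w u vv := ⟨pth, hW, hm.symm⟩
    refine ⟨⟨_, hmem⟩, le_trans (Nat.sInf_le hmem) ?_⟩
    have h2 : ((walkWeight w u pth).toNat : ℝ) ≤ (r : ℝ) := by
      calc ((walkWeight w u pth).toNat : ℝ) = ((walkWeight w u pth : ℤ) : ℝ) := by
            exact_mod_cast congrArg (fun z : ℤ => (z : ℝ)) hm
        _ ≤ r := hle
    exact_mod_cast h2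
  · rintro ⟨hne, hle⟩
    obtain ⟨pth, hW, heq⟩ := Nat.sInf_mem hne
    exact ⟨pth, hW, by rw [heq]; exact_mod_cast hle⟩

lemma telescope {l : ℕ} (q : Fin l → ℝ) (h0 : ∀ i, 0 ≤ q i) :
    ∑ j : Fin l, (∏ i ∈ Finset.univ.filter (fun i : Fin l => (i : ℕ) < (j : ℕ)), q i) * (1 - q j)
      ≤ 1 := by
  set P : ℕ → ℝ := fun m => ∏ i ∈ Finset.univ.filter (fun i : Fin l => (i : ℕ) < m), q i with hP
  have key : ∀ j : Fin l,
      (∏ i ∈ Finset.univ.filter (fun i : Fin l => (i : ℕ) < (j : ℕ)), q i) * (1 - q j)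
        = P (j : ℕ) - P ((j : ℕ) + 1) := by
    intro j
    have hins : Finset.univ.filter (fun i : Fin l => (i : ℕ) < (j : ℕ) + 1)
        = insert j (Finset.univ.filter (fun i : Fin l => (i : ℕ) < (j : ℕ))) := by
      ext i
      simp only [Finset.mem_filter, Finset.mem_insert, Finset.mem_univ, true_and, Fin.ext_iff]
      omega
    have h2 : P ((j : ℕ) + 1) = q j * P (j : ℕ) := by
      rw [hP]
      simp only
      rw [hins, Finset.prod_insert (by simp)]
    rw [h2, hP]
    ring
  calc ∑ j : Fin l,
        (∏ i ∈ Finset.univ.filter (fun i : Fin l => (i : ℕ) < (j : ℕ)), q i) * (1 - q j)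
      = ∑ j : Fin l, (P (j : ℕ) - P ((j : ℕ) + 1)) := Finset.sum_congr rfl fun j _ => key j
    _ = ∑ m ∈ Finset.range l, (P m - P (m + 1)) :=
        Fin.sum_univ_eq_sum_range (fun m => P m - P (m + 1)) l
    _ = P 0 - P l := Finset.sum_range_sub' P l
    _ ≤ 1 := by
        have hP0 : P 0 = 1 := by simp [hP]
        have hPl : 0 ≤ P l := Finset.prod_nonneg fun i _ => h0 i
        linarith

end Aux
set_option maxHeartbeats 2000000 in
open Classical in
/-- Light-boundary property of `FindBalancedSet`: for independent truncated
geometric radii (the product distribution on `Fin l → Fin (t+1)` with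
`Pr[dᵢ = k] = (1-p)^k p / (1-(1-p)^(t+1))`), each edge `e ∈ E` lies on the in-boundary
`δ⁻(A)` of the returned set `A` with probability at most `c² w(e) log₂ n / d`. -/
theorem find_balanced_set_light_boundary :
    ∃ c₀ : ℝ, 1 ≤ c₀ ∧ ∀ c : ℝ, c₀ ≤ c →
      ∀ (V : Type) [Fintype V] (E : Set (V × V)) (w : V × V → ℤ),
        (∀ e ∈ E, 0 ≤ w e) →
        ∀ n : ℕ, max (Fintype.card V) 2 ≤ n →
        ∀ d : ℕ, 0 < d →
        ∀ p : ℝ, p = min (c * Real.logb 2 (n : ℝ) / (d : ℝ)) 1 →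
        ∀ t : ℕ, t = d / 4 →
        ∀ l : ℕ, ∀ v : Fin l → V, Function.Injective v →
        (∀ i : Fin l, ((ballIn E w (v i) ((d : ℝ) / 4)).ncard : ℝ)
            ≤ 0.7 * (Fintype.card V : ℝ)) →
        ∀ K : (Fin l → Fin (t + 1)) → ℕ,
        (∀ f : Fin l → Fin (t + 1),
            KSpec E w v (fun j => (f j : ℕ)) (Fintype.card V) (K f)) →
        ∀ A : (Fin l → Fin (t + 1)) → Set V,
        (∀ f : Fin l → Fin (t + 1),
            A f = prefixUnion E w v (fun j => (f j : ℕ)) (K f)) →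
        ∀ e ∈ E,
          (∑ f ∈ Finset.univ.filter
              (fun f : Fin l → Fin (t + 1) => e.1 ∉ A f ∧ e.2 ∈ A f),
            ∏ i : Fin l, (1 - p) ^ (f i : ℕ) * p / (1 - (1 - p) ^ (t + 1)))
          ≤ c ^ 2 * (w e : ℝ) * Real.logb 2 (n : ℝ) / (d : ℝ) := by
  classical
  refine ⟨8, by norm_num, ?_⟩
  intro c hc V _ E w hw n hn d hd p hp t ht l v hv hball K hK A hA e he
  -- basic numeric facts
  have hn2 : (2 : ℕ) ≤ n := le_trans (le_max_right _ _) hn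
  have hnV : Fintype.card V ≤ n := le_trans (le_max_left _ _) hn
  have hn2R : (2 : ℝ) ≤ (n : ℝ) := by exact_mod_cast hn2
  have hlog2pos : (0 : ℝ) < Real.log 2 := Real.log_pos (by norm_num)
  have hlogb : (1 : ℝ) ≤ Real.logb 2 (n : ℝ) := by
    have hloglog : Real.log 2 ≤ Real.log (n : ℝ) := Real.log_le_log (by norm_num) hn2R
    rw [Real.logb, le_div_iff₀ hlog2pos]
    linarith
  have hdR : (0 : ℝ) < (d : ℝ) := by exact_mod_cast hd
  have hp_pos : 0 < p := by
    rw [hp]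
    apply lt_min
    · positivity
    · norm_num
  have hp_le1 : p ≤ 1 := by rw [hp]; exact min_le_right _ _
  set q : ℝ := 1 - p with hqdef
  have hq0 : 0 ≤ q := by rw [hqdef]; linarith
  have hq1 : q < 1 := by rw [hqdef]; linarith
  set Z : ℝ := 1 - q ^ (t + 1) with hZdef
  have hZ_pos : 0 < Z := by
    have h1 : q ^ (t + 1) < 1 := pow_lt_one₀ hq0 hq1 (Nat.succ_ne_zero t)
    rw [hZdef]; linarith
  have hZne : (1 : ℝ) - q ^ (t + 1) ≠ 0 := by rw [← hZdef]; exact hZ_pos.ne'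
  set g : Fin (t + 1) → ℝ := fun k => q ^ (k : ℕ) * p / Z with hgdef
  have hg0 : ∀ k, 0 ≤ g k := by
    intro k
    rw [hgdef]
    exact div_nonneg (mul_nonneg (pow_nonneg hq0 _) hp_pos.le) hZ_pos.le
  have hgsum : ∑ k : Fin (t + 1), g k = 1 := by
    have h1 : ∑ k : Fin (t + 1), g k = (∑ m ∈ Finset.range (t + 1), q ^ m) * (p / Z) := by
      rw [Finset.sum_mul, ← Fin.sum_univ_eq_sum_range (fun m => q ^ m * (p / Z)) (t + 1)]
      exact Finset.sum_congr rfl fun k _ => by rw [hgdef]; ring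
    rw [h1, geom_sum_eq hq1.ne, show q - 1 = -p from by rw [hqdef]; ring, hZdef]
    field_simp
    ring
  -- distances
  set a : Fin l → ℕ := fun j => mDist E w e.2 (v j) with hadef
  set b : Fin l → ℕ := fun j => mDist E w e.1 (v j) with hbdef
  set RY : Fin l → Prop := fun j => (wSet E w e.2 (v j)).Nonempty with hRYdef
  set W : ℕ := (w e).toNat with hWdef
  set ω : ℝ := (W : ℝ) with hωdef
  have hω0 : 0 ≤ ω := by rw [hωdef]; positivity
  have hωcast : ω = ((w e : ℤ) : ℝ) := by
    rw [hωdef, hWdef]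
    exact_mod_cast congrArg (fun z : ℤ => (z : ℝ)) (Int.toNat_of_nonneg (hw _ he))
  -- reachability transfer along the edge
  have hxreach : ∀ j : Fin l, RY j → (wSet E w e.1 (v j)).Nonempty ∧ b j ≤ W + a j := by
    intro j hj
    obtain ⟨pth, hWk, heq⟩ := Nat.sInf_mem hj
    have hmem : W + a j ∈ wSet E w e.1 (v j) := by
      refine ⟨e.2 :: pth, ⟨he, hWk⟩, ?_⟩
      show w (e.1, e.2) + walkWeight w e.2 pth = ((W + a j : ℕ) : ℤ)
      rw [heq]
      have hwe : ((W : ℕ) : ℤ) = w e := by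
        rw [hWdef]; exact Int.toNat_of_nonneg (hw _ he)
      push_cast
      rw [hwe]
      rfl
    exact ⟨⟨_, hmem⟩, Nat.sInf_le hmem⟩
  -- event inclusion
  have hincl : ∀ f : Fin l → Fin (t + 1), e.1 ∉ A f → e.2 ∈ A f →
      ∃ j : Fin l, (∀ i : Fin l, (i : ℕ) < (j : ℕ) → ¬(RY i ∧ a i ≤ (f i : ℕ))) ∧
        RY j ∧ a j ≤ (f j : ℕ) ∧ (f j : ℕ) < b j := by
    intro f hx hy
    rw [hA] at hx hy
    rw [prefixUnion] at hy
    simp only [Set.mem_iUnion] at hy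
    obtain ⟨j₀, hj₀K, hj₀⟩ := hy
    set T : Finset (Fin l) :=
      Finset.univ.filter (fun j => e.2 ∈ ballIn E w (v j) (((f j : ℕ) : ℝ))) with hT
    have hj₀T : j₀ ∈ T := by
      rw [hT, Finset.mem_filter]
      exact ⟨Finset.mem_univ _, hj₀⟩
    have hTne : T.Nonempty := ⟨j₀, hj₀T⟩
    set j := T.min' hTne with hj
    have hjT : j ∈ T := T.min'_mem hTne
    have hjball : e.2 ∈ ballIn E w (v j) (((f j : ℕ) : ℝ)) := by
      rw [hT, Finset.mem_filter] at hjT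
      exact hjT.2
    have hjlt : (j : ℕ) < K f := by
      have h1 : (j : ℕ) ≤ (j₀ : ℕ) := T.min'_le j₀ hj₀T
      exact lt_of_le_of_lt h1 hj₀K
    have hyb := (mem_ballIn_iff E w hw e.2 (v j) (f j)).1 hjball
    have hxnb : e.1 ∉ ballIn E w (v j) (((f j : ℕ) : ℝ)) := by
      intro hmem
      apply hx
      rw [prefixUnion]
      exact Set.mem_iUnion.2 ⟨j, Set.mem_iUnion.2 ⟨hjlt, hmem⟩⟩
    have hxre := hxreach j hyb.1
    have hflt : (f j : ℕ) < b j := by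
      by_contra hge
      push_neg at hge
      exact hxnb ((mem_ballIn_iff E w hw e.1 (v j) (f j)).2 ⟨hxre.1, hge⟩)
    refine ⟨j, ?_, hyb.1, hyb.2, hflt⟩
    intro i hi hcon
    have hiT : i ∈ T := by
      rw [hT, Finset.mem_filter]
      exact ⟨Finset.mem_univ _, (mem_ballIn_iff E w hw e.2 (v i) (f i)).2 hcon⟩
    have h2 : (j : ℕ) ≤ (i : ℕ) := T.min'_le i hiT
    omega
  -- finsets of radii
  set Tst : Fin l → Finset (Fin (t + 1)) :=
    fun j => Finset.univ.filter (fun k => RY j ∧ a j ≤ (k : ℕ)) with hTst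
  set Wst : Fin l → Finset (Fin (t + 1)) :=
    fun j => Finset.univ.filter (fun k => RY j ∧ a j ≤ (k : ℕ) ∧ (k : ℕ) < b j) with hWst
  set alw : Fin l → Fin l → Finset (Fin (t + 1)) :=
    fun j i => if (i : ℕ) < (j : ℕ) then (Tst i)ᶜ else if i = j then Wst j else Finset.univ
    with halw
  set qq : Fin l → ℝ := fun i => ∑ k ∈ (Tst i)ᶜ, g k with hqq
  set rP : Fin l → ℝ := fun j => ∑ k ∈ Wst j, g k with hrPdef
  have halwlt : ∀ j i : Fin l, (i : ℕ) < (j : ℕ) → alw j i = (Tst i)ᶜ := by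
    intro j i h
    simp only [halw]
    exact if_pos h
  have halwjj : ∀ j : Fin l, alw j j = Wst j := by
    intro j
    simp only [halw]
    rw [if_neg (lt_irrefl _)]
    simp
  have halwgt : ∀ j i : Fin l, ¬((i : ℕ) < (j : ℕ)) → i ≠ j → alw j i = Finset.univ := by
    intro j i h1 h2
    simp only [halw]
    rw [if_neg h1]
    exact if_neg h2
  have hqq0 : ∀ i, 0 ≤ qq i := by
    intro i; simp only [hqq]; exact Finset.sum_nonneg fun k _ => hg0 k
  have hqq1 : ∀ i, qq i ≤ 1 := by
    intro i
    simp only [hqq]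
    rw [← hgsum]
    exact Finset.sum_le_sum_of_subset_of_nonneg (Finset.subset_univ _) fun k _ _ => hg0 k
  have h1qq : ∀ j, 1 - qq j = ∑ k ∈ Tst j, g k := by
    intro j
    have h2 := Finset.sum_add_sum_compl (Tst j) g
    rw [hgsum] at h2
    simp only [hqq]
    linarith
  -- subset of bad events
  have hsub : Finset.univ.filter (fun f : Fin l → Fin (t + 1) => e.1 ∉ A f ∧ e.2 ∈ A f)
      ⊆ Finset.univ.biUnion (fun j => Fintype.piFinset (alw j)) := by
    intro f hf
    rw [Finset.mem_filter] at hf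
    obtain ⟨j, hmin, hRYj, haj, hbj⟩ := hincl f hf.2.1 hf.2.2
    refine Finset.mem_biUnion.2 ⟨j, Finset.mem_univ _, ?_⟩
    rw [Fintype.mem_piFinset]
    intro i
    rcases lt_trichotomy (i : ℕ) (j : ℕ) with h | h | h
    · rw [halwlt j i h, Finset.mem_compl]
      intro hmem
      simp only [hTst, Finset.mem_filter, Finset.mem_univ, true_and] at hmem
      exact hmin i h hmem
    · have hij : i = j := Fin.ext h
      subst hij
      rw [halwjj i]
      simp only [hWst, Finset.mem_filter, Finset.mem_univ, true_and]
      exact ⟨hRYj, haj, hbj⟩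
    · have h1 : ¬((i : ℕ) < (j : ℕ)) := by omega
      have h2 : i ≠ j := fun hij => by rw [hij] at h; omega
      rw [halwgt j i h1 h2]
      exact Finset.mem_univ _
  -- pairwise disjointness
  have hkey : ∀ j1 j2 : Fin l, j1 < j2 → ∀ f : Fin l → Fin (t + 1),
      f ∈ Fintype.piFinset (alw j1) → f ∈ Fintype.piFinset (alw j2) → False := by
    intro j1 j2 h12 f h1 h2
    rw [Fintype.mem_piFinset] at h1 h2
    have hA1 := h1 j1
    have hA2 := h2 j1
    rw [halwjj j1] at hA1
    rw [halwlt j2 j1 (show (j1 : ℕ) < (j2 : ℕ) from h12), Finset.mem_compl] at hA2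
    apply hA2
    simp only [hWst, hTst, Finset.mem_filter, Finset.mem_univ, true_and] at hA1 ⊢
    exact ⟨hA1.1, hA1.2.1⟩
  have hdisj : ((Finset.univ : Finset (Fin l)) : Set (Fin l)).PairwiseDisjoint
      (fun j => Fintype.piFinset (alw j)) := by
    intro j1 _ j2 _ hne
    rw [Function.onFun, Finset.disjoint_left]
    intro f h1 h2
    rcases hne.lt_or_gt with h | h
    · exact hkey j1 j2 h f h1 h2
    · exact hkey j2 j1 h f h2 h1
  -- factorization
  have hfac : ∀ j : Fin l, (∏ i : Fin l, ∑ k ∈ alw j i, g k)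
      = (∏ i ∈ Finset.univ.filter (fun i : Fin l => (i : ℕ) < (j : ℕ)), qq i) * rP j := by
    intro j
    rw [← Finset.prod_filter_mul_prod_filter_not Finset.univ
      (fun i : Fin l => (i : ℕ) < (j : ℕ)) (fun i => ∑ k ∈ alw j i, g k)]
    congr 1
    · refine Finset.prod_congr rfl fun i hi => ?_
      rw [Finset.mem_filter] at hi
      rw [halwlt j i hi.2]
    · have hjmem : j ∈ Finset.univ.filter (fun i : Fin l => ¬((i : ℕ) < (j : ℕ))) := by
        simp
      rw [Finset.prod_eq_single_of_mem j hjmem]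
      · rw [halwjj j]
      · intro i hi hne
        rw [Finset.mem_filter] at hi
        rw [halwgt j i hi.2 hne]
        exact hgsum
  -- per-index bound on rP
  have hrPb : ∀ j : Fin l, rP j ≤ ω * p * (1 - qq j) + ω * p * (q ^ (t + 1) / Z) := by
    intro j
    by_cases hcase : RY j ∧ a j ≤ t
    · obtain ⟨hRYj, hat⟩ := hcase
      have hcard : (Wst j).card ≤ W := by
        have hmaps : ∀ k ∈ Wst j, (k : ℕ) ∈ Finset.Ico (a j) (W + a j) := by
          intro k hk
          simp only [hWst, Finset.mem_filter] at hk
          rw [Finset.mem_Ico]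
          exact ⟨hk.2.2.1, lt_of_lt_of_le hk.2.2.2 ((hxreach j hRYj).2)⟩
        calc (Wst j).card ≤ (Finset.Ico (a j) (W + a j)).card :=
              Finset.card_le_card_of_injOn (fun k => (k : ℕ)) hmaps
                (fun k1 _ k2 _ h => Fin.ext h)
          _ = W := by rw [Nat.card_Ico]; omega
      have hbound1 : rP j ≤ ω * (q ^ (a j) * p / Z) := by
        simp only [hrPdef]
        calc ∑ k ∈ Wst j, g k ≤ (Wst j).card • (q ^ (a j) * p / Z) := by
              apply Finset.sum_le_card_nsmul
              intro k hk
              simp only [hWst, Finset.mem_filter] at hk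
              simp only [hgdef]
              have hpow : q ^ (k : ℕ) ≤ q ^ (a j) :=
                pow_le_pow_of_le_one hq0 hq1.le hk.2.2.1
              exact (div_le_div_iff_of_pos_right hZ_pos).2 (mul_le_mul_of_nonneg_right hpow hp_pos.le)
          _ ≤ ω * (q ^ (a j) * p / Z) := by
              rw [nsmul_eq_mul]
              apply mul_le_mul_of_nonneg_right _ (by positivity)
              rw [hωdef]
              exact_mod_cast hcard
      have h1qqval : 1 - qq j = (q ^ (a j) - q ^ (t + 1)) / Z := by
        rw [h1qq j]
        have e2 : (Finset.range (t + 1)).filter (fun m => a j ≤ m)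
            = Finset.Ico (a j) (t + 1) := by
          ext m
          simp only [Finset.mem_filter, Finset.mem_range, Finset.mem_Ico]
          omega
        have hsum2 : ∑ k ∈ Tst j, g k
            = (∑ m ∈ Finset.Ico (a j) (t + 1), q ^ m) * (p / Z) := by
          calc ∑ k ∈ Tst j, g k
              = ∑ k : Fin (t + 1), (if a j ≤ (k : ℕ) then q ^ (k : ℕ) * (p / Z) else 0) := by
                simp only [hTst]
                rw [Finset.sum_filter]
                refine Finset.sum_congr rfl fun k _ => ?_
                by_cases hk : a j ≤ (k : ℕ)
                · rw [if_pos (⟨hRYj, hk⟩ : RY j ∧ a j ≤ (k : ℕ)), if_pos hk]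
                  simp only [hgdef]
                  ring
                · rw [if_neg (fun hco => hk hco.2), if_neg hk]
            _ = ∑ m ∈ Finset.range (t + 1), (if a j ≤ m then q ^ m * (p / Z) else 0) :=
                Fin.sum_univ_eq_sum_range
                  (fun m => if a j ≤ m then q ^ m * (p / Z) else 0) (t + 1)
            _ = ∑ m ∈ (Finset.range (t + 1)).filter (fun m => a j ≤ m), q ^ m * (p / Z) :=
                (Finset.sum_filter _ _).symm
            _ = ∑ m ∈ Finset.Ico (a j) (t + 1), q ^ m * (p / Z) := by rw [e2]
            _ = (∑ m ∈ Finset.Ico (a j) (t + 1), q ^ m) * (p / Z) := by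
                rw [Finset.sum_mul]
        rw [hsum2, geom_sum_Ico hq1.ne (by omega : a j ≤ t + 1)]
        rw [show q - 1 = -p from by rw [hqdef]; ring]
        field_simp
        ring
      calc rP j ≤ ω * (q ^ (a j) * p / Z) := hbound1
        _ = ω * p * (1 - qq j) + ω * p * (q ^ (t + 1) / Z) := by
            rw [h1qqval]; field_simp; ring
    · have hW0 : Wst j = ∅ := by
        rw [hWst]
        ext k
        simp only [Finset.mem_filter, Finset.mem_univ, true_and, Finset.notMem_empty, iff_false]
        rintro ⟨hR, hle, _⟩
        exact hcase ⟨hR, le_trans hle (Nat.lt_succ_iff.mp k.isLt)⟩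
      have hz : rP j = 0 := by simp only [hrPdef]; rw [hW0, Finset.sum_empty]
      rw [hz]
      have h1 : 0 ≤ 1 - qq j := by linarith [hqq1 j]
      have h2 : 0 ≤ q ^ (t + 1) / Z := div_nonneg (pow_nonneg hq0 _) hZ_pos.le
      have h3 : 0 ≤ ω * p := mul_nonneg hω0 hp_pos.le
      nlinarith
  -- grand chain
  set Pj : Fin l → ℝ :=
    fun j => ∏ i ∈ Finset.univ.filter (fun i : Fin l => (i : ℕ) < (j : ℕ)), qq i with hPjdef
  have hPj0 : ∀ j, 0 ≤ Pj j := by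
    intro j; simp only [hPjdef]; exact Finset.prod_nonneg fun i _ => hqq0 i
  have hPj1 : ∀ j, Pj j ≤ 1 := by
    intro j; simp only [hPjdef]
    exact Finset.prod_le_one (fun i _ => hqq0 i) (fun i _ => hqq1 i)
  have hLHSrw : (∑ f ∈ Finset.univ.filter
        (fun f : Fin l → Fin (t + 1) => e.1 ∉ A f ∧ e.2 ∈ A f),
        ∏ i : Fin l, q ^ ((f i : ℕ)) * p / Z)
      = ∑ f ∈ Finset.univ.filter
        (fun f : Fin l → Fin (t + 1) => e.1 ∉ A f ∧ e.2 ∈ A f),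
        ∏ i : Fin l, g (f i) := by
    refine Finset.sum_congr rfl fun f _ => Finset.prod_congr rfl fun i _ => ?_
    rw [hgdef]
  have hsum_main : (∑ f ∈ Finset.univ.filter
        (fun f : Fin l → Fin (t + 1) => e.1 ∉ A f ∧ e.2 ∈ A f),
        ∏ i : Fin l, g (f i))
      ≤ ω * p + ω * p * (q ^ (t + 1) / Z) * l := by
    calc (∑ f ∈ Finset.univ.filter
          (fun f : Fin l → Fin (t + 1) => e.1 ∉ A f ∧ e.2 ∈ A f),
          ∏ i : Fin l, g (f i))
        ≤ ∑ f ∈ Finset.univ.biUnion (fun j => Fintype.piFinset (alw j)),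
            ∏ i : Fin l, g (f i) :=
          Finset.sum_le_sum_of_subset_of_nonneg hsub
            (fun f _ _ => Finset.prod_nonneg fun i _ => hg0 _)
      _ = ∑ j : Fin l, ∑ f ∈ Fintype.piFinset (alw j), ∏ i : Fin l, g (f i) :=
          Finset.sum_biUnion hdisj
      _ = ∑ j : Fin l, Pj j * rP j := by
          refine Finset.sum_congr rfl fun j _ => ?_
          rw [← Finset.prod_univ_sum (alw j) (fun _ k => g k), hfac j]
      _ ≤ ∑ j : Fin l, Pj j * (ω * p * (1 - qq j) + ω * p * (q ^ (t + 1) / Z)) :=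
          Finset.sum_le_sum fun j _ => mul_le_mul_of_nonneg_left (hrPb j) (hPj0 j)
      _ = ω * p * (∑ j : Fin l, Pj j * (1 - qq j))
          + ω * p * (q ^ (t + 1) / Z) * (∑ j : Fin l, Pj j) := by
          rw [Finset.mul_sum, Finset.mul_sum, ← Finset.sum_add_distrib]
          exact Finset.sum_congr rfl fun j _ => by ring
      _ ≤ ω * p * 1 + ω * p * (q ^ (t + 1) / Z) * l := by
          apply add_le_add
          · apply mul_le_mul_of_nonneg_left _ (mul_nonneg hω0 hp_pos.le)
            simp only [hPjdef]
            exact telescope qq hqq0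
          · apply mul_le_mul_of_nonneg_left _
              (mul_nonneg (mul_nonneg hω0 hp_pos.le)
                (div_nonneg (pow_nonneg hq0 _) hZ_pos.le))
            calc ∑ j : Fin l, Pj j ≤ ∑ _j : Fin l, (1 : ℝ) :=
                  Finset.sum_le_sum fun j _ => hPj1 j
              _ = l := by simp
      _ = ω * p + ω * p * (q ^ (t + 1) / Z) * l := by ring
  rw [hLHSrw]
  have hlln : ((l : ℕ) : ℝ) ≤ (n : ℝ) := by
    have h1 : l ≤ Fintype.card V := by
      have h2 := Fintype.card_le_of_injective v hv
      simpa using h2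
    exact_mod_cast le_trans h1 hnV
  rcases le_or_gt 1 (c * Real.logb 2 (n : ℝ) / (d : ℝ)) with hmin | hmin
  · -- p = 1 case
    have hp1 : p = 1 := by rw [hp, min_eq_right hmin]
    have hq0' : q = 0 := by rw [hqdef, hp1]; ring
    have hQt : q ^ (t + 1) = 0 := by rw [hq0']; exact zero_pow (Nat.succ_ne_zero t)
    have hfin : ω * p + ω * p * (q ^ (t + 1) / Z) * l = ω := by
      rw [hp1, hQt]; ring
    refine le_trans hsum_main ?_
    rw [hfin, hωcast]
    have key : c ^ 2 * ((w e : ℤ) : ℝ) * Real.logb 2 (n : ℝ) / (d : ℝ)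
        = c * ((w e : ℤ) : ℝ) * (c * Real.logb 2 (n : ℝ) / (d : ℝ)) := by ring
    rw [key]
    have hwe0 : (0 : ℝ) ≤ ((w e : ℤ) : ℝ) := by exact_mod_cast hw _ he
    calc ((w e : ℤ) : ℝ) = 1 * ((w e : ℤ) : ℝ) * 1 := by ring
      _ ≤ c * ((w e : ℤ) : ℝ) * (c * Real.logb 2 (n : ℝ) / (d : ℝ)) :=
          mul_le_mul (mul_le_mul_of_nonneg_right (by linarith) hwe0) hmin zero_le_one
            (mul_nonneg (by linarith) hwe0)
  · -- p = c logb n / d case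
    have hpe : p = c * Real.logb 2 (n : ℝ) / (d : ℝ) := by rw [hp, min_eq_left hmin.le]
    have hQt : q ^ (t + 1) ≤ ((n : ℝ) ^ 2)⁻¹ := by
      have h1 : q ≤ Real.exp (-p) := by
        have h2 := Real.add_one_le_exp (-p)
        rw [hqdef]; linarith
      have h2 : q ^ (t + 1) ≤ Real.exp (-p) ^ (t + 1) := pow_le_pow_left₀ hq0 h1 (t + 1)
      have h3 : Real.exp (-p) ^ (t + 1) = Real.exp (-(p * ((t : ℝ) + 1))) := by
        rw [← Real.exp_nat_mul]
        congr 1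
        push_cast
        ring
      have hd4 : (d : ℝ) ≤ 4 * (t : ℝ) + 4 := by
        have h5 : d ≤ 4 * t + 4 := by omega
        exact_mod_cast h5
      have hlog2le1 : Real.log 2 ≤ 1 := by
        have h6 := Real.log_le_sub_one_of_pos (show (0:ℝ) < 2 by norm_num)
        linarith
      have hlnn : 0 ≤ Real.log (n : ℝ) := Real.log_nonneg (by linarith)
      have hlogbeq : Real.logb 2 (n : ℝ) = Real.log (n : ℝ) / Real.log 2 := rfl
      have hpt : 2 * Real.log (n : ℝ) ≤ p * ((t : ℝ) + 1) := by
        have ht1 : (d : ℝ) / 4 ≤ (t : ℝ) + 1 := by linarith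
        have hstep : 2 * Real.log (n : ℝ) ≤ (c / 4) * Real.logb 2 (n : ℝ) := by
          rw [hlogbeq]
          have hm1 : Real.log (n : ℝ) * Real.log 2 ≤ Real.log (n : ℝ) :=
            mul_le_of_le_one_right hlnn hlog2le1
          have hm2 : Real.log (n : ℝ) ≤ Real.log (n : ℝ) / Real.log 2 := by
            rw [le_div_iff₀ hlog2pos]
            linarith
          have hm3 : 0 ≤ Real.log (n : ℝ) / Real.log 2 := div_nonneg hlnn hlog2pos.le
          have hm4 : 0 ≤ (c / 4 - 2) * (Real.log (n : ℝ) / Real.log 2) :=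
            mul_nonneg (by linarith) hm3
          linarith [hm2, hm4]
        calc 2 * Real.log (n : ℝ) ≤ (c / 4) * Real.logb 2 (n : ℝ) := hstep
          _ = (c * Real.logb 2 (n : ℝ) / (d : ℝ)) * ((d : ℝ) / 4) := by
              field_simp
          _ ≤ p * ((t : ℝ) + 1) := by
              rw [← hpe]
              exact mul_le_mul_of_nonneg_left ht1 hp_pos.le
      calc q ^ (t + 1) ≤ Real.exp (-(p * ((t : ℝ) + 1))) := h3 ▸ h2
        _ ≤ Real.exp (-(2 * Real.log (n : ℝ))) := Real.exp_le_exp.2 (by linarith)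
        _ = ((n : ℝ) ^ 2)⁻¹ := by
            rw [Real.exp_neg]
            congr 1
            rw [show (2 : ℝ) * Real.log (n : ℝ) = ((2 : ℕ) : ℝ) * Real.log (n : ℝ) by norm_num,
              Real.exp_nat_mul, Real.exp_log (by linarith : (0 : ℝ) < (n : ℝ))]
    have hterm : ω * p * (q ^ (t + 1) / Z) * l ≤ ω * p := by
      have hZhalf : (1 : ℝ) / 2 ≤ Z := by
        have hn4 : (4 : ℝ) ≤ (n : ℝ) ^ 2 := by
          have hm := mul_le_mul hn2R hn2R (by norm_num : (0:ℝ) ≤ 2) (by linarith : (0:ℝ) ≤ (n:ℝ))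
          calc (4 : ℝ) = 2 * 2 := by norm_num
            _ ≤ (n : ℝ) * (n : ℝ) := hm
            _ = (n : ℝ) ^ 2 := (pow_two _).symm
        have h4 : ((n : ℝ) ^ 2)⁻¹ ≤ (4 : ℝ)⁻¹ := by
          apply inv_anti₀ (by norm_num) hn4
        rw [hZdef]
        have := hQt
        linarith
      have h1 : q ^ (t + 1) / Z ≤ 2 * ((n : ℝ) ^ 2)⁻¹ := by
        calc q ^ (t + 1) / Z ≤ q ^ (t + 1) / (1 / 2) :=
              div_le_div_of_nonneg_left (pow_nonneg hq0 _) (by norm_num) hZhalf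
          _ = 2 * q ^ (t + 1) := by ring
          _ ≤ 2 * ((n : ℝ) ^ 2)⁻¹ := by linarith
      have h2 : (q ^ (t + 1) / Z) * l ≤ 1 := by
        have hqZ0 : 0 ≤ q ^ (t + 1) / Z := div_nonneg (pow_nonneg hq0 _) hZ_pos.le
        have hl0 : (0 : ℝ) ≤ (l : ℝ) := Nat.cast_nonneg l
        calc (q ^ (t + 1) / Z) * l ≤ (2 * ((n : ℝ) ^ 2)⁻¹) * (n : ℝ) :=
              mul_le_mul h1 hlln hl0 (by positivity)
          _ = 2 / (n : ℝ) := by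
              field_simp
          _ ≤ 1 := by
              rw [div_le_one (by linarith)]
              linarith
      calc ω * p * (q ^ (t + 1) / Z) * l = (ω * p) * ((q ^ (t + 1) / Z) * l) := by ring
        _ ≤ (ω * p) * 1 := mul_le_mul_of_nonneg_left h2 (mul_nonneg hω0 hp_pos.le)
        _ = ω * p := by ring
    refine le_trans hsum_main ?_
    calc ω * p + ω * p * (q ^ (t + 1) / Z) * l ≤ ω * p + ω * p := by linarith
      _ = 2 * (ω * p) := by ring
      _ ≤ c * (ω * p) := by
          apply mul_le_mul_of_nonneg_right (by linarith) (mul_nonneg hω0 hp_pos.le)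
      _ = c ^ 2 * ((w e : ℤ) : ℝ) * Real.logb 2 (n : ℝ) / (d : ℝ) := by
          rw [hωcast, hpe]
          ring
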